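/- Let f : [N+1, N+L] → ℝ where N is an integer and L, M are positive integers. Then |∑_{n=N+1}^{N+L} e(f(n))|² ≤ ((L+M−1)/M)·(L + 2·∑_{m=1}^{M} (1 − m/M)·|s'_m(L)|), where s'_m(L) = ∑_{r=N+1}^{N+L−m} e(f(m+r) − f(r)) (an empty sum when m ≥ L). -/

import Mathlib

open Real Complex Finset

namespace VdC13

noncomputable def ee (f : ℤ → ℝ) (n : ℤ) : ℂ := Complex.exp (2 * π * Complex.I * (f n))

noncomputable def g (N : ℤ) (L : ℕ) (f : ℤ → ℝ) (a m : ℤ) : ℂ :=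
  if a + m ∈ Finset.Icc (N + 1) (N + L) then ee f (a + m) else 0

noncomputable def s (N : ℤ) (L : ℕ) (f : ℤ → ℝ) (d : ℤ) : ℂ :=
  ∑ r ∈ Finset.Icc (N + 1) (N + L - d), Complex.exp (2 * π * Complex.I * (f (d + r) - f r))

lemma exp_mul_conj (x y : ℝ) :
    Complex.exp (2 * π * Complex.I * x) * (starRingEnd ℂ) (Complex.exp (2 * π * Complex.I * y)) =
    Complex.exp (2 * π * Complex.I * ((x : ℂ) - (y : ℂ))) := by
  rw [← Complex.exp_conj, ← Complex.exp_add]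
  congr 1
  rw [map_mul, map_mul, map_mul]
  simp only [Complex.conj_I, Complex.conj_ofReal, map_ofNat]
  ring

lemma s_zero (N : ℤ) (L : ℕ) (f : ℤ → ℝ) : s N L f 0 = (L : ℂ) := by
  have h : ∀ r : ℤ, Complex.exp (2 * π * Complex.I * ((f (0 + r) : ℂ) - (f r : ℂ))) = 1 := by
    intro r
    rw [zero_add, sub_self, mul_zero, Complex.exp_zero]
  unfold s
  rw [Finset.sum_congr rfl fun r _ => h r, Finset.sum_const, Int.card_Icc]
  have : (N + (L:ℤ) - 0 + 1 - (N + 1)).toNat = L := by omega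
  rw [this]
  simp


lemma key (N : ℤ) (L M : ℕ) (f : ℤ → ℝ) {m1 m2 : ℤ}
    (h1 : m1 ∈ Finset.Icc 1 (M : ℤ)) (h2 : m2 ∈ Finset.Icc 1 (M : ℤ)) (hle : m2 ≤ m1) :
    ∑ a ∈ Finset.Icc (N + 1 - M) (N + L - 1), g N L f a m1 * (starRingEnd ℂ) (g N L f a m2)
      = s N L f (m1 - m2) := by
  simp only [Finset.mem_Icc] at h1 h2
  have hterm : ∀ a : ℤ, g N L f a m1 * (starRingEnd ℂ) (g N L f a m2) =
      if a ∈ Finset.Icc (N + 1 - m2) (N + L - m1) then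
        Complex.exp (2 * π * Complex.I * ((f (a + m1) : ℂ) - (f (a + m2) : ℂ))) else 0 := by
    intro a
    simp only [g, ee, Finset.mem_Icc]
    by_cases ha1 : N + 1 ≤ a + m1 ∧ a + m1 ≤ N + L
    · by_cases ha2 : N + 1 ≤ a + m2 ∧ a + m2 ≤ N + L
      · rw [if_pos ha1, if_pos ha2, if_pos (by omega), exp_mul_conj]
      · rw [if_neg ha2, map_zero, mul_zero, if_neg (by omega)]
    · rw [if_neg ha1, zero_mul, if_neg (by omega)]
  rw [Finset.sum_congr rfl fun a _ => hterm a, ← Finset.sum_filter]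
  have hfil : (Finset.Icc (N + 1 - (M:ℤ)) (N + L - 1)).filter
      (fun a => a ∈ Finset.Icc (N + 1 - m2) (N + L - m1)) = Finset.Icc (N + 1 - m2) (N + L - m1) := by
    ext a
    simp only [Finset.mem_filter, Finset.mem_Icc]
    omega
  rw [hfil]
  unfold s
  refine Finset.sum_nbij' (fun a => a + m2) (fun r => r - m2) ?_ ?_ ?_ ?_ ?_
  · intro a ha; simp only [Finset.mem_Icc] at *; omega
  · intro r hr; simp only [Finset.mem_Icc] at *; omega
  · intro a _; ring
  · intro r _; ring
  · intro a _
    have h3 : m1 - m2 + (a + m2) = a + m1 := by ring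
    rw [h3]

lemma sum_g (N : ℤ) (L M : ℕ) (f : ℤ → ℝ) {m : ℤ} (hm : m ∈ Finset.Icc 1 (M : ℤ)) :
    ∑ a ∈ Finset.Icc (N + 1 - M) (N + L - 1), g N L f a m
      = ∑ n ∈ Finset.Icc (N + 1) (N + L), ee f n := by
  simp only [Finset.mem_Icc] at hm
  unfold g
  rw [← Finset.sum_filter]
  have hfil : (Finset.Icc (N + 1 - (M:ℤ)) (N + L - 1)).filter
      (fun a => a + m ∈ Finset.Icc (N + 1) (N + (L:ℤ))) = Finset.Icc (N + 1 - m) (N + L - m) := by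
    ext a
    simp only [Finset.mem_filter, Finset.mem_Icc]
    omega
  rw [hfil]
  refine Finset.sum_nbij' (fun a => a + m) (fun n => n - m) ?_ ?_ ?_ ?_ ?_
  · intro a ha; simp only [Finset.mem_Icc] at *; omega
  · intro n hn; simp only [Finset.mem_Icc] at *; omega
  · intro a _; ring
  · intro n _; ring
  · intro a _; rfl

lemma conj_symm (N : ℤ) (L M : ℕ) (f : ℤ → ℝ) (m1 m2 : ℤ) :
    ∑ a ∈ Finset.Icc (N + 1 - M) (N + L - 1), g N L f a m2 * (starRingEnd ℂ) (g N L f a m1)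
      = (starRingEnd ℂ) (∑ a ∈ Finset.Icc (N + 1 - M) (N + L - 1),
          g N L f a m1 * (starRingEnd ℂ) (g N L f a m2)) := by
  rw [map_sum]
  refine Finset.sum_congr rfl fun a _ => ?_
  rw [map_mul, RingHomCompTriple.comp_apply]
  simp [mul_comm]


noncomputable def phi (N : ℤ) (L M : ℕ) (f : ℤ → ℝ) (m1 m2 : ℤ) : ℝ :=
  (∑ a ∈ Finset.Icc (N + 1 - M) (N + L - 1), g N L f a m1 * (starRingEnd ℂ) (g N L f a m2)).re

lemma phi_diag (N : ℤ) (L M : ℕ) (f : ℤ → ℝ) {m : ℤ} (hm : m ∈ Finset.Icc 1 (M : ℤ)) :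
    phi N L M f m m = (L : ℝ) := by
  unfold phi
  rw [key N L M f hm hm le_rfl, sub_self, s_zero]
  simp

lemma phi_symm (N : ℤ) (L M : ℕ) (f : ℤ → ℝ) (m1 m2 : ℤ) :
    phi N L M f m1 m2 = phi N L M f m2 m1 := by
  unfold phi
  rw [conj_symm N L M f m1 m2]
  simp

lemma phi_off (N : ℤ) (L M : ℕ) (f : ℤ → ℝ) {m1 m2 : ℤ}
    (h1 : m1 ∈ Finset.Icc 1 (M : ℤ)) (h2 : m2 ∈ Finset.Icc 1 (M : ℤ)) (hle : m2 ≤ m1) :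
    phi N L M f m1 m2 ≤ ‖s N L f (m1 - m2)‖ := by
  unfold phi
  rw [key N L M f h1 h2 hle]
  exact Complex.re_le_norm _

lemma count (M : ℕ) (D : ℤ → ℝ) :
    ∑ m1 ∈ Finset.Icc (1:ℤ) M, ∑ m2 ∈ Finset.Icc (1:ℤ) (m1 - 1), D (m1 - m2)
      = ∑ d ∈ Finset.Icc (1:ℤ) M, ((M:ℤ) - d).toNat • D d := by
  have h1 : ∀ m1 ∈ Finset.Icc (1:ℤ) (M:ℤ),
      ∑ m2 ∈ Finset.Icc (1:ℤ) (m1-1), D (m1 - m2) = ∑ d ∈ Finset.Icc (1:ℤ) (m1-1), D d := by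
    intro m1 _
    refine Finset.sum_nbij' (fun m2 => m1 - m2) (fun d => m1 - d) ?_ ?_ ?_ ?_ ?_
    · intro x hx; simp only [Finset.mem_Icc] at *; omega
    · intro x hx; simp only [Finset.mem_Icc] at *; omega
    · intro x _; ring
    · intro x _; ring
    · intro x _; rfl
  rw [Finset.sum_congr rfl h1,
    Finset.sum_comm' (t' := Finset.Icc (1:ℤ) (M:ℤ)) (s' := fun d => Finset.Icc (d+1) (M:ℤ))
      (by intro x y; simp only [Finset.mem_Icc]; omega)]
  refine Finset.sum_congr rfl fun d hd => ?_
  rw [Finset.sum_const, Int.card_Icc]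
  congr 1
  omega

lemma total_bound (N : ℤ) (L M : ℕ) (f : ℤ → ℝ) :
    ∑ m1 ∈ Finset.Icc (1:ℤ) M, ∑ m2 ∈ Finset.Icc (1:ℤ) M, phi N L M f m1 m2
      ≤ (M:ℝ) * L + 2 * ∑ d ∈ Finset.Icc (1:ℤ) M, ((M:ℝ) - (d:ℝ)) * ‖s N L f d‖ := by
  have hsplit : ∀ m1 ∈ Finset.Icc (1:ℤ) (M:ℤ), ∑ m2 ∈ Finset.Icc (1:ℤ) (M:ℤ), phi N L M f m1 m2
      = phi N L M f m1 m1 + (∑ m2 ∈ Finset.Icc (1:ℤ) (m1-1), phi N L M f m1 m2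
        + ∑ m2 ∈ Finset.Icc (m1+1) (M:ℤ), phi N L M f m1 m2) := by
    intro m1 hm1
    rw [← Finset.add_sum_erase _ _ hm1]
    congr 1
    have hu : (Finset.Icc (1:ℤ) (M:ℤ)).erase m1
        = Finset.Icc (1:ℤ) (m1-1) ∪ Finset.Icc (m1+1) (M:ℤ) := by
      simp only [Finset.mem_Icc] at hm1
      ext x
      simp only [Finset.mem_erase, Finset.mem_Icc, Finset.mem_union]
      omega
    rw [hu, Finset.sum_union (by
      rw [Finset.disjoint_left]
      intro x hx hx'
      simp only [Finset.mem_Icc] at hx hx'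
      omega)]
  rw [Finset.sum_congr rfl hsplit, Finset.sum_add_distrib, Finset.sum_add_distrib]
  have hdiag : ∑ m1 ∈ Finset.Icc (1:ℤ) (M:ℤ), phi N L M f m1 m1 = (M:ℝ) * L := by
    rw [Finset.sum_congr rfl (fun m hm => phi_diag N L M f hm), Finset.sum_const, Int.card_Icc]
    have h2 : ((M:ℤ) + 1 - 1).toNat = M := by omega
    rw [h2, nsmul_eq_mul]
  have hupper : ∑ m1 ∈ Finset.Icc (1:ℤ) (M:ℤ), ∑ m2 ∈ Finset.Icc (m1+1) (M:ℤ), phi N L M f m1 m2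
      = ∑ m1 ∈ Finset.Icc (1:ℤ) (M:ℤ), ∑ m2 ∈ Finset.Icc (1:ℤ) (m1-1), phi N L M f m1 m2 := by
    rw [Finset.sum_comm' (t' := Finset.Icc (1:ℤ) (M:ℤ)) (s' := fun y => Finset.Icc (1:ℤ) (y-1))
      (by intro x y; simp only [Finset.mem_Icc]; omega)]
    exact Finset.sum_congr rfl fun y _ => Finset.sum_congr rfl fun x _ => phi_symm N L M f x y
  have hbound : ∑ m1 ∈ Finset.Icc (1:ℤ) (M:ℤ), ∑ m2 ∈ Finset.Icc (1:ℤ) (m1-1), phi N L M f m1 m2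
      ≤ ∑ d ∈ Finset.Icc (1:ℤ) (M:ℤ), ((M:ℝ) - (d:ℝ)) * ‖s N L f d‖ := by
    calc ∑ m1 ∈ Finset.Icc (1:ℤ) (M:ℤ), ∑ m2 ∈ Finset.Icc (1:ℤ) (m1-1), phi N L M f m1 m2
        ≤ ∑ m1 ∈ Finset.Icc (1:ℤ) (M:ℤ), ∑ m2 ∈ Finset.Icc (1:ℤ) (m1-1),
            ‖s N L f (m1 - m2)‖ := by
          refine Finset.sum_le_sum fun m1 hm1 => Finset.sum_le_sum fun m2 hm2 => ?_
          simp only [Finset.mem_Icc] at hm1 hm2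
          exact phi_off N L M f (by simp only [Finset.mem_Icc]; omega)
            (by simp only [Finset.mem_Icc]; omega) (by omega)
      _ = ∑ d ∈ Finset.Icc (1:ℤ) (M:ℤ), ((M:ℤ) - d).toNat • ‖s N L f d‖ :=
          count M (fun d => ‖s N L f d‖)
      _ = ∑ d ∈ Finset.Icc (1:ℤ) (M:ℤ), ((M:ℝ) - (d:ℝ)) * ‖s N L f d‖ := by
          refine Finset.sum_congr rfl fun d hd => ?_
          simp only [Finset.mem_Icc] at hd
          rw [nsmul_eq_mul]
          congr 1
          have h1 : ((((M:ℤ) - d).toNat : ℤ) : ℝ) = (((M:ℤ) - d : ℤ) : ℝ) := by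
            rw [Int.toNat_of_nonneg (by omega)]
          push_cast at h1 ⊢
          linarith
  linarith


lemma sum_sq_eq (N : ℤ) (L M : ℕ) (f : ℤ → ℝ) :
    ∑ a ∈ Finset.Icc (N + 1 - M) (N + L - 1),
        ‖∑ m ∈ Finset.Icc (1:ℤ) M, g N L f a m‖ ^ 2
      = ∑ m1 ∈ Finset.Icc (1:ℤ) M, ∑ m2 ∈ Finset.Icc (1:ℤ) M, phi N L M f m1 m2 := by
  have habs : ∀ z : ℂ, ‖z‖ ^ 2 = (z * (starRingEnd ℂ) z).re := by
    intro z
    rw [Complex.mul_conj, Complex.sq_norm, Complex.ofReal_re]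
  calc ∑ a ∈ Finset.Icc (N + 1 - (M:ℤ)) (N + L - 1),
        ‖∑ m ∈ Finset.Icc (1:ℤ) M, g N L f a m‖ ^ 2
      = ∑ a ∈ Finset.Icc (N + 1 - (M:ℤ)) (N + L - 1), ∑ m1 ∈ Finset.Icc (1:ℤ) M,
          ∑ m2 ∈ Finset.Icc (1:ℤ) M, (g N L f a m1 * (starRingEnd ℂ) (g N L f a m2)).re := by
        refine Finset.sum_congr rfl fun a _ => ?_
        rw [habs, map_sum, Finset.sum_mul_sum, Complex.re_sum]
        exact Finset.sum_congr rfl fun m1 _ => Complex.re_sum _ _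
    _ = ∑ m1 ∈ Finset.Icc (1:ℤ) M, ∑ a ∈ Finset.Icc (N + 1 - (M:ℤ)) (N + L - 1),
          ∑ m2 ∈ Finset.Icc (1:ℤ) M, (g N L f a m1 * (starRingEnd ℂ) (g N L f a m2)).re :=
        Finset.sum_comm
    _ = ∑ m1 ∈ Finset.Icc (1:ℤ) M, ∑ m2 ∈ Finset.Icc (1:ℤ) M,
          ∑ a ∈ Finset.Icc (N + 1 - (M:ℤ)) (N + L - 1),
            (g N L f a m1 * (starRingEnd ℂ) (g N L f a m2)).re :=
        Finset.sum_congr rfl fun _ _ => Finset.sum_comm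
    _ = ∑ m1 ∈ Finset.Icc (1:ℤ) M, ∑ m2 ∈ Finset.Icc (1:ℤ) M, phi N L M f m1 m2 :=
        Finset.sum_congr rfl fun m1 _ => Finset.sum_congr rfl fun m2 _ =>
          (Complex.re_sum _ _).symm

end VdC13

theorem stmt_13 (N : ℤ) (L M : ℕ) (hL : 0 < L) (hM : 0 < M) (f : ℤ → ℝ) :
    ‖∑ n ∈ Finset.Icc (N + 1) (N + L), Complex.exp (2 * π * Complex.I * (f n))‖ ^ 2
      ≤ ((L + M - 1 : ℝ) / M) *
        ((L : ℝ) + 2 * ∑ m ∈ Finset.Icc 1 M, (1 - (m : ℝ) / M) *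
          ‖∑ r ∈ Finset.Icc (N + 1) (N + L - m),
            Complex.exp (2 * π * Complex.I * (f (m + r) - f r))‖) := by
  have hM0 : (0:ℝ) < (M:ℝ) := by exact_mod_cast hM
  set S : ℂ := ∑ n ∈ Finset.Icc (N + 1) (N + (L:ℤ)), VdC13.ee f n with hSdef
  set X : ℝ := ‖S‖ with hXdef
  set Q : ℝ := ∑ m ∈ Finset.Icc 1 M, (1 - (m : ℝ) / M) *
      ‖∑ r ∈ Finset.Icc (N + 1) (N + L - m),
        Complex.exp (2 * π * Complex.I * (f (m + r) - f r))‖ with hQdef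
  show X ^ 2 ≤ ((L + M - 1 : ℝ) / M) * ((L : ℝ) + 2 * Q)
  -- the integer-indexed weighted sum
  set SIG : ℝ := ∑ d ∈ Finset.Icc (1:ℤ) M, ((M:ℝ) - (d:ℝ)) * ‖VdC13.s N L f d‖
    with hSIGdef
  have hJcard : (Finset.Icc (1:ℤ) M).card = M := by rw [Int.card_Icc]; omega
  have hAcard : (Finset.Icc (N + 1 - (M:ℤ)) (N + (L:ℤ) - 1)).card = L + M - 1 := by
    rw [Int.card_Icc]; omega
  have hMS : (M:ℂ) * S = ∑ a ∈ Finset.Icc (N + 1 - (M:ℤ)) (N + (L:ℤ) - 1),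
      ∑ m ∈ Finset.Icc (1:ℤ) M, VdC13.g N L f a m := by
    rw [Finset.sum_comm, Finset.sum_congr rfl (fun m hm => VdC13.sum_g N L M f hm),
      Finset.sum_const, hJcard, nsmul_eq_mul]
  have habs : (M:ℝ) * X ≤ ∑ a ∈ Finset.Icc (N + 1 - (M:ℤ)) (N + (L:ℤ) - 1),
      ‖∑ m ∈ Finset.Icc (1:ℤ) M, VdC13.g N L f a m‖ := by
    have h1 : (M:ℝ) * X = ‖(M:ℂ) * S‖ := by
      rw [norm_mul, Complex.norm_natCast]
    rw [h1, hMS]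
    refine (norm_sum_le _ _).trans (le_of_eq ?_)
    rfl
  have hCS : (∑ a ∈ Finset.Icc (N + 1 - (M:ℤ)) (N + (L:ℤ) - 1),
      ‖∑ m ∈ Finset.Icc (1:ℤ) M, VdC13.g N L f a m‖) ^ 2
      ≤ ((L + M - 1 : ℕ) : ℝ) * ∑ a ∈ Finset.Icc (N + 1 - (M:ℤ)) (N + (L:ℤ) - 1),
          ‖∑ m ∈ Finset.Icc (1:ℤ) M, VdC13.g N L f a m‖ ^ 2 := by
    have h := sq_sum_le_card_mul_sum_sq
      (s := Finset.Icc (N + 1 - (M:ℤ)) (N + (L:ℤ) - 1))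
      (f := fun a => ‖∑ m ∈ Finset.Icc (1:ℤ) M, VdC13.g N L f a m‖)
    rwa [hAcard] at h
  have hSIGQ : SIG = (M:ℝ) * Q := by
    have hSIGN : SIG = ∑ m ∈ Finset.Icc 1 M, ((M:ℝ) - (m:ℝ)) * ‖VdC13.s N L f m‖ := by
      refine Finset.sum_nbij' (fun d => d.toNat) (fun m => (m : ℤ)) ?_ ?_ ?_ ?_ ?_
      · intro d hd; simp only [Finset.mem_Icc] at hd ⊢; omega
      · intro m hm; simp only [Finset.mem_Icc] at hm ⊢; omega
      · intro d hd; simp only [Finset.mem_Icc] at hd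
        show ((d.toNat : ℕ) : ℤ) = d
        omega
      · intro m _; simp
      · intro d hd
        simp only [Finset.mem_Icc] at hd
        have h1 : ((d.toNat : ℕ) : ℤ) = d := by omega
        have h2 : ((d.toNat : ℕ) : ℝ) = (d : ℝ) := by exact_mod_cast h1
        rw [h1, h2]
    have hQs : Q = ∑ m ∈ Finset.Icc 1 M, (1 - (m : ℝ) / M) *
        ‖VdC13.s N L f m‖ := rfl
    rw [hSIGN, hQs, Finset.mul_sum]
    refine Finset.sum_congr rfl fun m hm => ?_
    field_simp
    try ring
  have htot := VdC13.total_bound N L M f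
  have hsq := VdC13.sum_sq_eq N L M f
  have hc : ((L + M - 1 : ℕ) : ℝ) = (L:ℝ) + (M:ℝ) - 1 := by
    rw [Nat.cast_sub (by omega), Nat.cast_add, Nat.cast_one]
  have hXnn : 0 ≤ (M:ℝ) * X := by positivity
  have h6 : ((M:ℝ) * X) ^ 2 ≤ ((L:ℝ) + (M:ℝ) - 1) * ((M:ℝ) * ((L:ℝ) + 2 * Q)) := by
    calc ((M:ℝ) * X) ^ 2
        ≤ (∑ a ∈ Finset.Icc (N + 1 - (M:ℤ)) (N + (L:ℤ) - 1),
            ‖∑ m ∈ Finset.Icc (1:ℤ) M, VdC13.g N L f a m‖) ^ 2 :=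
          pow_le_pow_left₀ hXnn habs 2
      _ ≤ ((L + M - 1 : ℕ) : ℝ) * ∑ a ∈ Finset.Icc (N + 1 - (M:ℤ)) (N + (L:ℤ) - 1),
            ‖∑ m ∈ Finset.Icc (1:ℤ) M, VdC13.g N L f a m‖ ^ 2 := hCS
      _ ≤ ((L + M - 1 : ℕ) : ℝ) * ((M:ℝ) * L + 2 * SIG) := by
          rw [hsq]
          refine mul_le_mul_of_nonneg_left htot ?_
          positivity
      _ = ((L:ℝ) + (M:ℝ) - 1) * ((M:ℝ) * ((L:ℝ) + 2 * Q)) := by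
          rw [hc, hSIGQ]; ring
  rw [div_mul_eq_mul_div, le_div_iff₀ hM0]
  nlinarith [h6, hM0]
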